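/- Let X be a compact Hausdorff space with a continuous semigroup action α of S that is expansive, minimal, and has the pseudo-orbit tracing property. Then there exists a finite K ⊆ S and entourage W of X such that for every continuous action β of S on X with (α_k(x), β_k(x)) ∈ W for all k ∈ K, x ∈ X, there exists a continuous surjective map h : X → X with α_s ∘ h = h ∘ β_s for all s ∈ S (i.e., α is a factor of β). -/

import Mathlib

/-- If `α` is an expansive, minimal continuous semigroup action with the pseudo-orbit
tracing property, then there exist a finite `K ⊆ S` and an entourage `W` such that `α` is
a factor of every continuous action `β` with `(α_k x, β_k x) ∈ W` for all `k ∈ K`,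
`x ∈ X`: there is a continuous surjection `h : X → X` with `α_s ∘ h = h ∘ β_s`. -/
theorem stmt_5 {S X : Type*} [Semigroup S] [UniformSpace X] [CompactSpace X] [T2Space X]
    (α : S → X → X) (hαact : ∀ (s t : S) (x : X), α (s * t) x = α s (α t x))
    (hαcont : ∀ s : S, Continuous (α s))
    (hexp : ∃ E ∈ uniformity X, ∀ x y : X, x ≠ y → ∃ s : S, (α s x, α s y) ∉ E)
    (hmin : ∀ x : X, Dense {y : X | ∃ s : S, y = α s x})
    (hpotp : ∀ U ∈ uniformity X, ∃ K : Finset S, ∃ V ∈ uniformity X,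
        ∀ xs : S → X, (∀ k ∈ K, ∀ s : S, (α k (xs s), xs (k * s)) ∈ V) →
          ∃ x : X, ∀ s : S, (α s x, xs s) ∈ U) :
    ∃ K : Finset S, ∃ W ∈ uniformity X,
      ∀ β : S → X → X, (∀ (s t : S) (x : X), β (s * t) x = β s (β t x)) →
        (∀ s : S, Continuous (β s)) →
        (∀ k ∈ K, ∀ x : X, (α k x, β k x) ∈ W) →
        ∃ h : X → X, Function.Surjective h ∧ Continuous h ∧
          ∀ (s : S) (x : X), α s (h x) = h (β s x) := by
  classical
  obtain ⟨E, hE, hEexp⟩ := hexp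
  -- choose E' with E' ○ E' ⊆ E
  obtain ⟨E', hE', hE'E⟩ := comp_mem_uniformity_sets hE
  -- choose a closed entourage C ⊆ E'
  obtain ⟨C, ⟨hC, hCclosed⟩, hCE'⟩ := uniformity_hasBasis_closed.mem_iff.1 hE'
  -- symmetrize it
  set U : Set (X × X) := SetRel.symmetrize C with hUdef
  have hU : U ∈ uniformity X := symmetrize_mem_uniformity hC
  have hUsymm : SetRel.IsSymm U := SetRel.isSymm_symmetrize
  have hUclosed : IsClosed U :=
    hCclosed.inter (hCclosed.preimage continuous_swap)
  have hUC : U ⊆ C := SetRel.symmetrize_subset_self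
  -- uniqueness of traced points
  have huniq : ∀ (f : S → X) (z z' : X), (∀ s, (α s z, f s) ∈ U) →
      (∀ s, (α s z', f s) ∈ U) → z = z' := by
    intro f z z' h1 h2
    by_contra hne
    obtain ⟨s, hs⟩ := hEexp z z' hne
    apply hs
    apply hE'E
    exact ⟨f s, hCE' (hUC (h1 s)), hCE' (hUC (SetRel.symm (R := U) (h2 s)))⟩
  obtain ⟨K, V, hV, htrace⟩ := hpotp U hU
  refine ⟨K, V, hV, ?_⟩
  intro β hβact hβcont hβclose
  -- for each x, the β-orbit of x is a V-pseudo-orbit for α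
  have hpo : ∀ x : X, ∀ k ∈ K, ∀ s : S, (α k (β s x), β (k * s) x) ∈ V := by
    intro x k hk s
    rw [hβact k s x]
    exact hβclose k hk (β s x)
  have hex : ∀ x : X, ∃ z : X, ∀ s : S, (α s z, β s x) ∈ U := fun x =>
    htrace (fun s => β s x) (hpo x)
  choose h hh using hex
  have hequiv : ∀ (x z : X), (∀ s, (α s z, β s x) ∈ U) ↔ z = h x := by
    intro x z
    constructor
    · intro hz; exact huniq (fun s => β s x) z (h x) hz (hh x)
    · rintro rfl; exact hh x
  have hcomm : ∀ (s : S) (x : X), α s (h x) = h (β s x) := by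
    intro t x
    apply (hequiv (β t x) (α t (h x))).1
    intro s
    rw [← hαact s t (h x), ← hβact s t x]
    exact hh x (s * t)
  -- continuity via the closed graph
  have hcont : Continuous h := by
    rw [continuous_iff_isClosed]
    intro C' hC'
    have hG : IsClosed {p : X × X | ∀ s, (α s p.1, β s p.2) ∈ U} := by
      have : {p : X × X | ∀ s, (α s p.1, β s p.2) ∈ U} =
          ⋂ s : S, (fun p : X × X => (α s p.1, β s p.2)) ⁻¹' U := by
        ext p; simp [Set.mem_iInter]
      rw [this]
      exact isClosed_iInter fun s =>
        hUclosed.preimage (((hαcont s).comp continuous_fst).prodMk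
          ((hβcont s).comp continuous_snd))
    have key : h ⁻¹' C' =
        Prod.snd '' ({p : X × X | ∀ s, (α s p.1, β s p.2) ∈ U} ∩ C' ×ˢ Set.univ) := by
      ext x
      constructor
      · intro hx
        exact ⟨(h x, x), ⟨hh x, hx, trivial⟩, rfl⟩
      · rintro ⟨⟨z, y⟩, ⟨hzy, hz, -⟩, rfl⟩
        have : z = h y := (hequiv y z).1 hzy
        simpa [this] using hz
    rw [key]
    exact isClosedMap_snd_of_compactSpace _
      (hG.inter (hC'.prod isClosed_univ))
  -- surjectivity via minimality
  have hsurj : Function.Surjective h := by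
    intro y
    have hrange : IsClosed (Set.range h) :=
      (isCompact_range hcont).isClosed
    have horbit : {w : X | ∃ s : S, w = α s (h y)} ⊆ Set.range h := by
      rintro w ⟨s, rfl⟩
      rw [hcomm s y]
      exact ⟨β s y, rfl⟩
    have huniv : Set.univ ⊆ Set.range h := by
      rw [← (hmin (h y)).closure_eq]
      calc closure {w : X | ∃ s : S, w = α s (h y)}
          ⊆ closure (Set.range h) := closure_mono horbit
        _ = Set.range h := hrange.closure_eq
    exact huniv (Set.mem_univ y)
  exact ⟨h, hsurj, hcont, hcomm⟩
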